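/- Let G be a group, B a central subgroup of G contained in a normal subgroup A of G. Then the group of automorphisms of G that induce the identity on both A and G/B is isomorphic to Hom(G/A, B). -/

import Mathlib

/-- The subgroup of automorphisms of `G` inducing the identity on `A`
(i.e. fixing `A` pointwise) and on `G ⧸ B` (i.e. `x⁻¹ * α x ∈ B` for all `x`). -/
def autIndId {G : Type*} [Group G] (A B : Subgroup G) : Subgroup (MulAut G) where
  carrier := {α | (∀ a ∈ A, α a = a) ∧ ∀ x : G, x⁻¹ * α x ∈ B}
  one_mem' := ⟨fun _ _ => rfl, fun x => by simpa using B.one_mem⟩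
  mul_mem' := by
    rintro α β ⟨hα1, hα2⟩ ⟨hβ1, hβ2⟩
    refine ⟨fun a ha => by simp [MulAut.mul_apply, hβ1 a ha, hα1 a ha], fun x => ?_⟩
    have : x⁻¹ * (α * β) x = (x⁻¹ * β x) * ((β x)⁻¹ * α (β x)) := by
      simp [MulAut.mul_apply, mul_assoc]
    rw [this]
    exact B.mul_mem (hβ2 x) (hα2 (β x))
  inv_mem' := by
    rintro α ⟨hα1, hα2⟩
    refine ⟨fun a ha => α.injective (by simp [hα1 a ha]), fun x => ?_⟩
    have : x⁻¹ * α⁻¹ x = ((α⁻¹ x)⁻¹ * α (α⁻¹ x))⁻¹ := by simp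
    rw [this]
    exact B.inv_mem (hα2 (α⁻¹ x))

/-- Alperin's lemma: if `B` is a central subgroup of `G` contained in a normal subgroup
`A`, then the group of automorphisms of `G` inducing the identity on both `A` and `G ⧸ B`
is isomorphic to `Hom(G ⧸ A, B)`. -/
theorem autIndId_mulEquiv_hom {G : Type*} [Group G] (A B : Subgroup G) [A.Normal]
    (hBA : B ≤ A) (hB : B ≤ Subgroup.center G) :
    letI : CommGroup B :=
      { (inferInstance : Group B) with
        mul_comm := fun a b =>
          Subtype.ext ((Subgroup.mem_center_iff.mp (hB b.2) a)) }
    Nonempty (autIndId A B ≃* ((G ⧸ A) →* B)) := by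
  letI : CommGroup B :=
    { (inferInstance : Group B) with
      mul_comm := fun a b =>
        Subtype.ext ((Subgroup.mem_center_iff.mp (hB b.2) a)) }
  have hcent : ∀ b ∈ B, ∀ g : G, g * b = b * g := fun b hb g =>
    Subgroup.mem_center_iff.mp (hB hb) g
  -- the forward map on one automorphism
  have hfix : ∀ α : autIndId A B, ∀ a ∈ A, (α : MulAut G) a = a := fun α => α.2.1
  have hmem : ∀ α : autIndId A B, ∀ x : G, x⁻¹ * (α : MulAut G) x ∈ B := fun α => α.2.2
  let toB : autIndId A B → ((G ⧸ A) →* B) := fun α =>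
    QuotientGroup.lift A
      { toFun := fun x => (⟨x⁻¹ * (α : MulAut G) x, hmem α x⟩ : B)
        map_one' := by ext; simp
        map_mul' := by
          intro x y
          ext
          show (x * y)⁻¹ * (α : MulAut G) (x * y) = (x⁻¹ * (α : MulAut G) x) * (y⁻¹ * (α : MulAut G) y)
          have h := hcent _ (hmem α x) y⁻¹
          rw [map_mul, mul_inv_rev]
          calc y⁻¹ * x⁻¹ * ((α : MulAut G) x * (α : MulAut G) y)
              = y⁻¹ * (x⁻¹ * (α : MulAut G) x) * (α : MulAut G) y := by group
            _ = (x⁻¹ * (α : MulAut G) x) * y⁻¹ * (α : MulAut G) y := by rw [h]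
            _ = (x⁻¹ * (α : MulAut G) x) * (y⁻¹ * (α : MulAut G) y) := by group }
      (by
        intro a ha
        ext
        simp [hfix α a ha])
  have toB_apply : ∀ (α : autIndId A B) (x : G),
      ((toB α (x : G ⧸ A) : B) : G) = x⁻¹ * (α : MulAut G) x := fun α x => rfl
  have toB_mul : ∀ α β : autIndId A B, toB (α * β) = toB α * toB β := by
    intro α β
    ext x
    show x⁻¹ * (α : MulAut G) ((β : MulAut G) x) =
        (x⁻¹ * (α : MulAut G) x) * (x⁻¹ * (β : MulAut G) x)
    have hb : x⁻¹ * (β : MulAut G) x ∈ A := hBA (hmem β x)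
    have : (β : MulAut G) x = x * (x⁻¹ * (β : MulAut G) x) := by group
    rw [this, map_mul, hfix α _ hb]
    group
  have toB_inj : Function.Injective toB := by
    intro α β h
    ext x
    have := congrArg Subtype.val (congrArg (fun f => f ((x : G ⧸ A))) h)
    simp only [toB_apply] at this
    exact mul_left_cancel this
  have toB_surj : Function.Surjective toB := by
    intro f
    have hAone : ∀ (x : G), ((x * ((f x : B) : G) : G) : G ⧸ A) = (x : G ⧸ A) := by
      intro x
      have : (((f x : B) : G) : G ⧸ A) = 1 := (QuotientGroup.eq_one_iff _).mpr (hBA (f x).2)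
      rw [QuotientGroup.mk_mul, this, mul_one]
    let e : G ≃* G :=
      { toFun := fun x => x * ((f x : B) : G)
        invFun := fun x => x * (((f x : B)⁻¹ : B) : G)
        left_inv := by
          intro x
          simp only [hAone x]
          rw [mul_assoc, ← Subgroup.coe_mul]
          simp
        right_inv := by
          intro x
          have h1 : ((x * (((f x : B)⁻¹ : B) : G) : G) : G ⧸ A) = (x : G ⧸ A) := by
            have : ((((f x : B)⁻¹ : B) : G) : G ⧸ A) = 1 :=
              (QuotientGroup.eq_one_iff _).mpr (hBA ((f x : B)⁻¹).2)
            rw [QuotientGroup.mk_mul, this, mul_one]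
          simp only [h1]
          rw [mul_assoc, ← Subgroup.coe_mul]
          simp
        map_mul' := by
          intro x y
          show (x * y) * ((f (((x * y : G) : G ⧸ A)) : B) : G) =
            (x * ((f x : B) : G)) * (y * ((f y : B) : G))
          rw [QuotientGroup.mk_mul, map_mul]
          push_cast
          have hc := hcent _ (f (x : G ⧸ A)).2 y
          calc x * y * (((f (x : G ⧸ A) : B) : G) * ((f (y : G ⧸ A) : B) : G))
              = x * ((y * ((f (x : G ⧸ A) : B) : G)) * ((f (y : G ⧸ A) : B) : G)) := by group
            _ = x * ((((f (x : G ⧸ A) : B) : G) * y) * ((f (y : G ⧸ A) : B) : G)) := by rw [hc]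
            _ = (x * ((f (x : G ⧸ A) : B) : G)) * (y * ((f (y : G ⧸ A) : B) : G)) := by group }
    have he : (e : MulAut G) ∈ autIndId A B := by
      constructor
      · intro a ha
        show a * ((f (a : G ⧸ A) : B) : G) = a
        have : ((a : G) : G ⧸ A) = 1 := (QuotientGroup.eq_one_iff _).mpr ha
        rw [this, map_one]
        simp
      · intro x
        show x⁻¹ * (x * ((f (x : G ⧸ A) : B) : G)) ∈ B
        rw [← mul_assoc]
        simp only [inv_mul_cancel, one_mul]
        exact (f (x : G ⧸ A)).2
    refine ⟨⟨e, he⟩, ?_⟩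
    ext x
    show x⁻¹ * (x * ((f (x : G ⧸ A) : B) : G)) = ((f (x : G ⧸ A) : B) : G)
    group
  exact ⟨MulEquiv.ofBijective (MonoidHom.mk' toB toB_mul) ⟨toB_inj, toB_surj⟩⟩
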